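/- Let Ω ⊆ ℂ^d be open connected and X ⊆ H(Ω) satisfy the hypotheses of Theorem 3.3. If Ω is NOT an X-domain of holomorphy, then there exist open balls B₁ ⊆ cl(B₁) ⊆ B₂ ∩ Ω with B₂ ∩ Ω ≠ ∅, B₂ ∩ Ωᶜ ≠ ∅, such that every f ∈ X restricted to B₁ admits a bounded holomorphic extension to B₂. -/

import Mathlib

open Metric Set Filter

/-- `f` is extendable in the sense of Riemann domains from the domain `Ω`. -/
def ExtendableRiemann {d : ℕ} (Ω : Set (EuclideanSpace ℂ (Fin d)))
    (f : EuclideanSpace ℂ (Fin d) → ℂ) : Prop :=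
  ∃ (c₁ c₂ : EuclideanSpace ℂ (Fin d)) (r₁ r₂ : ℝ), 0 < r₁ ∧ 0 < r₂ ∧
    closedBall c₁ r₁ ⊆ ball c₂ r₂ ∩ Ω ∧
    (ball c₂ r₂ ∩ Ω).Nonempty ∧ (ball c₂ r₂ ∩ Ωᶜ).Nonempty ∧
    ∃ (F : EuclideanSpace ℂ (Fin d) → ℂ) (M : ℝ),
      DifferentiableOn ℂ F (ball c₂ r₂) ∧
      (∀ z ∈ ball c₂ r₂, ‖F z‖ ≤ M) ∧
      EqOn F f (ball c₁ r₁)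

section Helpers

open Metric Set Filter Complex Asymptotics
open scoped ENNReal NNReal Topology

variable {d : ℕ}
local notation "E" => EuclideanSpace ℂ (Fin d)

/-- Cauchy coefficient estimate (one variable). -/
lemma coeff_est {h : ℂ → ℂ} {ρ M : ℝ} (hρ : 0 < ρ)
    (hd : DifferentiableOn ℂ h (closedBall 0 ρ))
    (hM : ∀ z ∈ closedBall (0:ℂ) ρ, ‖h z‖ ≤ M) (k : ℕ) :
    ‖cauchyPowerSeries h 0 ρ k‖ ≤ M / ρ ^ k := by
  have hcont : ContinuousOn (fun θ : ℝ => ‖h (circleMap 0 ρ θ)‖) (uIcc 0 (2*Real.pi)) := by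
    apply (hd.continuousOn.comp (continuous_circleMap 0 ρ).continuousOn ?_).norm
    intro θ _
    simpa using sphere_subset_closedBall (circleMap_mem_sphere (0:ℂ) hρ.le θ)
  have hineq : (∫ θ : ℝ in (0)..2 * Real.pi, ‖h (circleMap 0 ρ θ)‖) ≤ 2 * Real.pi * M := by
    have : (∫ θ : ℝ in (0)..2 * Real.pi, ‖h (circleMap 0 ρ θ)‖) ≤
        ∫ _θ : ℝ in (0)..2 * Real.pi, M := by
      apply intervalIntegral.integral_mono_on Real.two_pi_pos.le
      · exact hcont.intervalIntegrable
      · exact intervalIntegrable_const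
      · intro θ _
        exact hM _ (sphere_subset_closedBall (circleMap_mem_sphere (0:ℂ) hρ.le θ))
    simpa [mul_comm] using this
  calc ‖cauchyPowerSeries h 0 ρ k‖
      ≤ ((2 * Real.pi)⁻¹ * ∫ θ : ℝ in (0)..2 * Real.pi, ‖h (circleMap 0 ρ θ)‖) * |ρ|⁻¹ ^ k :=
        norm_cauchyPowerSeries_le h 0 ρ k
    _ ≤ ((2 * Real.pi)⁻¹ * (2 * Real.pi * M)) * |ρ|⁻¹ ^ k := by
        exact mul_le_mul_of_nonneg_right
          (mul_le_mul_of_nonneg_left hineq (by positivity)) (by positivity)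
    _ = M / ρ ^ k := by
        rw [abs_of_pos hρ]
        field_simp
        rw [div_pow, one_pow, mul_assoc, one_div_mul_cancel (pow_ne_zero _ hρ.ne'), mul_one]

/-- One-variable quantitative Taylor remainder estimate. -/
lemma remainder_est {h : ℂ → ℂ} {ρ M : ℝ} (hρ : 0 < ρ)
    (hd : DifferentiableOn ℂ h (closedBall 0 ρ))
    (hM : ∀ z ∈ closedBall (0:ℂ) ρ, ‖h z‖ ≤ M) {s : ℂ} (hs : ‖s‖ ≤ ρ / 2) :
    ‖h s - h 0 - deriv h 0 * s‖ ≤ (2 * M / ρ ^ 2) * ‖s‖ ^ 2 := by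
  have hM0 : 0 ≤ M := le_trans (norm_nonneg _) (hM 0 (mem_closedBall_self hρ.le))
  lift ρ to NNReal using hρ.le with R hR
  have hRpos : 0 < R := by exact_mod_cast hρ
  set p := cauchyPowerSeries h 0 R with hp
  have H : HasFPowerSeriesOnBall h p 0 R := hd.hasFPowerSeriesOnBall hRpos
  set a : ℕ → ℂ := fun k => p k fun _ => s with ha
  have hak : ∀ k, ‖a k‖ ≤ M / (R:ℝ) ^ k * ‖s‖ ^ k := by
    intro k
    calc ‖a k‖ ≤ ‖p k‖ * ∏ _i : Fin k, ‖s‖ := (p k).le_opNorm _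
      _ = ‖p k‖ * ‖s‖ ^ k := by simp
      _ ≤ M / (R:ℝ) ^ k * ‖s‖ ^ k := by
          exact mul_le_mul_of_nonneg_right (coeff_est hρ hd hM k) (by positivity)
  have hslt : ‖s‖ < (R:ℝ) := lt_of_le_of_lt hs (by linarith)
  have hsum : HasSum a (h s) := by
    have hmem : (s : ℂ) ∈ Metric.eball (0:ℂ) (R:ℝ≥0∞) := by
      rw [EMetric.mem_ball, edist_zero_right]
      exact_mod_cast hslt
    have := H.hasSum hmem
    rw [zero_add] at this
    exact this
  -- identify the first two coefficients
  have ha0 : a 0 = h 0 := by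
    have := H.coeff_zero (fun _ => s)
    simpa [ha] using this
  have ha1 : a 1 = deriv h 0 * s := by
    have hder : deriv h 0 = p 1 fun _ => (1:ℂ) := H.hasFPowerSeriesAt.deriv
    have : (p 1 fun _ => s) = s • (p 1 fun _ => (1:ℂ)) := by
      have := (p 1).map_smul_univ (fun _ : Fin 1 => s) (fun _ => (1:ℂ))
      simpa using this
    rw [ha]
    simp only [this, hder, smul_eq_mul]
    ring
  have htail : HasSum (fun n => a (n + 2)) (h s - (a 0 + a 1)) := by
    have := (hasSum_nat_add_iff' (f := a) 2).mpr hsum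
    simpa [Finset.sum_range_succ] using this
  have hq : ‖s‖ / (R:ℝ) ≤ 1/2 := by
    rw [div_le_div_iff₀ hρ (by norm_num)] <;> linarith
  have hgeom : HasSum (fun n : ℕ => (M * (‖s‖/(R:ℝ))^2) * (1/2)^n)
      ((M * (‖s‖/(R:ℝ))^2) * 2) := by
    have := hasSum_geometric_of_lt_one (r := (1/2:ℝ)) (by norm_num) (by norm_num)
    have h2 : (1 - (1/2:ℝ))⁻¹ = 2 := by norm_num
    rw [h2] at this
    exact this.mul_left _
  have hbound : ‖h s - (a 0 + a 1)‖ ≤ (M * (‖s‖/(R:ℝ))^2) * 2 := by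
    rw [← htail.tsum_eq]
    apply tsum_of_norm_bounded hgeom
    intro n
    calc ‖a (n+2)‖ ≤ M / (R:ℝ) ^ (n+2) * ‖s‖ ^ (n+2) := hak (n+2)
      _ = (M * (‖s‖/(R:ℝ))^2) * (‖s‖/(R:ℝ))^n := by
          field_simp
          rw [div_pow, pow_add, pow_add, mul_div_assoc', eq_div_iff (pow_ne_zero _ hρ.ne')]
          ring
      _ ≤ (M * (‖s‖/(R:ℝ))^2) * (1/2)^n := by
          apply mul_le_mul_of_nonneg_left (pow_le_pow_left₀ (by positivity) hq n)
          positivity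
  calc ‖h s - h 0 - deriv h 0 * s‖ = ‖h s - (a 0 + a 1)‖ := by rw [ha0, ha1]; ring_nf
    _ ≤ (M * (‖s‖/(R:ℝ))^2) * 2 := hbound
    _ = 2 * M / (R:ℝ) ^ 2 * ‖s‖ ^ 2 := by
        field_simp

/-- Setup: restriction of `F` to a complex line. -/
lemma line_setup {F : E → ℂ} {z₀ : E} {R M : ℝ} (hR : 0 < R)
    (hd : DifferentiableOn ℂ F (closedBall z₀ R))
    (hM : ∀ z ∈ closedBall z₀ R, ‖F z‖ ≤ M) {u : E} (hu : ‖u‖ = 1) :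
    DifferentiableOn ℂ (fun t : ℂ => F (z₀ + t • u)) (closedBall 0 R) ∧
    (∀ t ∈ closedBall (0:ℂ) R, ‖F (z₀ + t • u)‖ ≤ M) ∧
    deriv (fun t : ℂ => F (z₀ + t • u)) 0 = fderiv ℂ F z₀ u := by
  have hmapsTo : MapsTo (fun t : ℂ => z₀ + t • u) (closedBall 0 R) (closedBall z₀ R) := by
    intro t ht
    simp only [mem_closedBall, dist_eq_norm] at ht ⊢
    simp only [add_sub_cancel_left, norm_smul, hu, mul_one]
    simpa using ht
  have hline : Differentiable ℂ (fun t : ℂ => z₀ + t • u) :=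
    (differentiable_id.smul_const u).const_add z₀
  refine ⟨hd.comp hline.differentiableOn hmapsTo, fun t ht => hM _ (hmapsTo ht), ?_⟩
  have hFd : DifferentiableAt ℂ F z₀ := hd.differentiableAt (closedBall_mem_nhds z₀ hR)
  have hinner : HasDerivAt (fun t : ℂ => z₀ + t • u) u 0 := by
    simpa using ((hasDerivAt_id (0:ℂ)).smul_const u).const_add z₀
  have h0' : z₀ + (0:ℂ) • u = z₀ := by simp
  have hF' : HasFDerivAt F (fderiv ℂ F z₀) (z₀ + (0:ℂ) • u) := by
    rw [h0']; exact hFd.hasFDerivAt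
  have : HasDerivAt (fun t : ℂ => F (z₀ + t • u)) (fderiv ℂ F z₀ u) 0 := by
    have := hF'.comp_hasDerivAt 0 hinner
    exact this
  exact this.deriv

/-- Uniform first-order approximation for a bounded holomorphic function on a ball. -/
lemma approx_est {F : E → ℂ} {z₀ : E} {R M : ℝ} (hR : 0 < R)
    (hd : DifferentiableOn ℂ F (closedBall z₀ R))
    (hM : ∀ z ∈ closedBall z₀ R, ‖F z‖ ≤ M) {w : E} (hw : ‖w‖ ≤ R / 2) :
    ‖F (z₀ + w) - F z₀ - fderiv ℂ F z₀ w‖ ≤ (2 * M / R ^ 2) * ‖w‖ ^ 2 := by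
  rcases eq_or_ne w 0 with rfl | hw0
  · simp
  have hnw : 0 < ‖w‖ := norm_pos_iff.mpr hw0
  set u : E := ‖w‖⁻¹ • w with hu'
  have hu : ‖u‖ = 1 := by
    rw [hu', norm_smul]
    simp [abs_of_pos (inv_pos.mpr hnw), inv_mul_cancel₀ hnw.ne']
  obtain ⟨hd', hM', hder⟩ := line_setup hR hd hM hu
  have key := remainder_est hR hd' hM' (s := (‖w‖ : ℂ)) (by simpa using hw)
  have hsu : ((‖w‖ : ℂ)) • u = w := by
    rw [hu', Complex.coe_smul, smul_smul, mul_inv_cancel₀ hnw.ne', one_smul]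
  have hder2 : deriv (fun t : ℂ => F (z₀ + t • u)) 0 * (‖w‖:ℂ) = fderiv ℂ F z₀ w := by
    rw [hder, mul_comm, ← smul_eq_mul, ← ContinuousLinearMap.map_smul, hsu]
  rw [hsu, hder2] at key
  simp only [zero_smul, add_zero] at key
  simpa using key

/-- Derivative bound. -/
lemma deriv_bound {F : E → ℂ} {z₀ : E} {R M : ℝ} (hR : 0 < R)
    (hd : DifferentiableOn ℂ F (closedBall z₀ R))
    (hM : ∀ z ∈ closedBall z₀ R, ‖F z‖ ≤ M) :
    ‖fderiv ℂ F z₀‖ ≤ M / R := by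
  have hM0 : 0 ≤ M := le_trans (norm_nonneg _) (hM z₀ (mem_closedBall_self hR.le))
  apply ContinuousLinearMap.opNorm_le_bound _ (by positivity)
  intro v
  rcases eq_or_ne v 0 with rfl | hv0
  · simp
  have hnv : 0 < ‖v‖ := norm_pos_iff.mpr hv0
  set u : E := ‖v‖⁻¹ • v with hu'
  have hu : ‖u‖ = 1 := by
    rw [hu', norm_smul]
    simp [abs_of_pos (inv_pos.mpr hnv), inv_mul_cancel₀ hnv.ne']
  obtain ⟨hd', hM', hder⟩ := line_setup hR hd hM hu
  have hdcc : DiffContOnCl ℂ (fun t : ℂ => F (z₀ + t • u)) (ball 0 R) :=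
    ⟨hd'.mono ball_subset_closedBall,
      hd'.continuousOn.mono (closure_ball_subset_closedBall)⟩
  have hb : ‖deriv (fun t : ℂ => F (z₀ + t • u)) 0‖ ≤ M / R :=
    norm_deriv_le_of_forall_mem_sphere_norm_le hR hdcc
      (fun z hz => hM' z (sphere_subset_closedBall hz))
  rw [hder] at hb
  have hsu : ((‖v‖ : ℂ)) • u = v := by
    rw [hu', Complex.coe_smul, smul_smul, mul_inv_cancel₀ hnv.ne', one_smul]
  have hvu : fderiv ℂ F z₀ v = (‖v‖:ℂ) • fderiv ℂ F z₀ u := by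
    rw [← ContinuousLinearMap.map_smul, hsu]
  rw [hvu, norm_smul]
  simp only [Complex.norm_real, norm_norm]
  calc ‖v‖ * ‖fderiv ℂ F z₀ u‖ ≤ ‖v‖ * (M/R) := by
        exact mul_le_mul_of_nonneg_left hb hnv.le
    _ = M / R * ‖v‖ := by ring

/-- An ultrafilter pointwise limit of a uniformly bounded sequence of holomorphic functions
on a ball in `ℂ^d` is holomorphic. -/
lemma limit_diff {F : ℕ → E → ℂ} {G : E → ℂ} {c : E} {r M : ℝ}
    (φ : Ultrafilter ℕ)
    (hd : ∀ n, DifferentiableOn ℂ (F n) (ball c r))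
    (hM : ∀ n, ∀ z ∈ ball c r, ‖F n z‖ ≤ M)
    (hlim : ∀ z ∈ ball c r, Tendsto (fun n => F n z) ↑φ (𝓝 (G z))) :
    DifferentiableOn ℂ G (ball c r) := by
  intro z₀ hz₀
  have hR : 0 < (r - dist z₀ c) / 2 := by
    have := mem_ball.mp hz₀
    linarith
  set R := (r - dist z₀ c) / 2 with hRdef
  have hsub : closedBall z₀ R ⊆ ball c r := by
    intro y hy
    rw [mem_closedBall] at hy
    rw [mem_ball]
    calc dist y c ≤ dist y z₀ + dist z₀ c := dist_triangle _ _ _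
      _ ≤ R + dist z₀ c := by linarith
      _ < r := by rw [hRdef]; linarith [dist_nonneg (x := z₀) (y := c)]
  have hM0 : 0 ≤ M := le_trans (norm_nonneg _) (hM 0 z₀ hz₀)
  set L : ℕ → (E →L[ℂ] ℂ) := fun n => fderiv ℂ (F n) z₀ with hL
  have hdn : ∀ n, DifferentiableOn ℂ (F n) (closedBall z₀ R) :=
    fun n => (hd n).mono hsub
  have hMn : ∀ n, ∀ z ∈ closedBall z₀ R, ‖F n z‖ ≤ M :=
    fun n z hz => hM n z (hsub hz)
  have hLb : ∀ n, L n ∈ closedBall (0 : E →L[ℂ] ℂ) (M / R) := by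
    intro n
    rw [mem_closedBall_zero_iff]
    exact deriv_bound hR (hdn n) (hMn n)
  -- extract an ultrafilter limit of the derivatives
  haveI : ProperSpace (E →L[ℂ] ℂ) := FiniteDimensional.proper ℂ _
  have hcomp : IsCompact (closedBall (0 : E →L[ℂ] ℂ) (M / R)) := isCompact_closedBall _ _
  obtain ⟨Loo, -, hLoo⟩ := hcomp.ultrafilter_le_nhds (φ.map L)
    (by rw [Ultrafilter.coe_map, Filter.le_principal_iff]
        exact Filter.mem_map.mpr (by filter_upwards with n using hLb n))
  rw [Ultrafilter.coe_map] at hLoo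
  have hLt : Tendsto L ↑φ (𝓝 Loo) := hLoo
  -- the key pointwise estimate for the limit
  have hkey : ∀ w : E, ‖w‖ ≤ R / 2 →
      ‖G (z₀ + w) - G z₀ - Loo w‖ ≤ (2 * M / R ^ 2) * ‖w‖ ^ 2 := by
    intro w hw
    have hmem : z₀ + w ∈ ball c r := hsub (by
      rw [mem_closedBall, dist_eq_norm, add_sub_cancel_left]
      linarith)
    have h1 : Tendsto (fun n => F n (z₀ + w)) ↑φ (𝓝 (G (z₀ + w))) := hlim _ hmem
    have h2 : Tendsto (fun n => F n z₀) ↑φ (𝓝 (G z₀)) := hlim _ (hsub (mem_closedBall_self hR.le))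
    have h3 : Tendsto (fun n => L n w) ↑φ (𝓝 (Loo w)) := by
      have : Continuous (fun A : E →L[ℂ] ℂ => A w) :=
        (ContinuousLinearMap.apply ℂ ℂ w).continuous
      exact (this.tendsto Loo).comp hLt
    have h4 : Tendsto (fun n => ‖F n (z₀ + w) - F n z₀ - L n w‖) ↑φ
        (𝓝 ‖G (z₀ + w) - G z₀ - Loo w‖) := ((h1.sub h2).sub h3).norm
    apply le_of_tendsto h4
    filter_upwards with n
    exact approx_est hR (hdn n) (hMn n) hw
  -- conclude differentiability
  have hfd : HasFDerivAt G Loo z₀ := by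
    rw [hasFDerivAt_iff_isLittleO_nhds_zero]
    have hbig : (fun w : E => G (z₀ + w) - G z₀ - Loo w) =O[𝓝 0] (fun w => ‖w‖ ^ 2) := by
      apply IsBigO.of_bound (2 * M / R ^ 2)
      have hev : ∀ᶠ w : E in 𝓝 0, ‖w‖ ≤ R / 2 := by
        filter_upwards [Metric.closedBall_mem_nhds (0 : E) (show (0:ℝ) < R/2 by positivity)] with w hw
        rwa [mem_closedBall, dist_zero_right] at hw
      filter_upwards [hev] with w hw
      calc ‖G (z₀ + w) - G z₀ - Loo w‖ ≤ (2 * M / R ^ 2) * ‖w‖ ^ 2 := hkey w hw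
        _ = (2 * M / R ^ 2) * ‖(‖w‖ ^ 2 : ℝ)‖ := by
            rw [Real.norm_of_nonneg (by positivity)]
    have hlittle : (fun w : E => ‖w‖ ^ 2) =o[𝓝 0] (fun w : E => w) := by
      rw [isLittleO_iff]
      intro ε hε
      filter_upwards [Metric.closedBall_mem_nhds (0 : E) hε] with w hw
      rw [mem_closedBall, dist_zero_right] at hw
      rw [Real.norm_of_nonneg (by positivity)]
      calc ‖w‖ ^ 2 = ‖w‖ * ‖w‖ := sq ‖w‖
        _ ≤ ε * ‖w‖ := mul_le_mul_of_nonneg_right hw (norm_nonneg _)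
    exact hbig.trans_isLittleO hlittle
  exact hfd.differentiableAt.differentiableWithinAt

end Helpers

open scoped Topology in
theorem stmt15 {d : ℕ} (Ω : Set (EuclideanSpace ℂ (Fin d)))
    (hΩo : IsOpen Ω) (hΩc : IsConnected Ω)
    (X : Type*) [AddCommGroup X] [Module ℂ X] [MetricSpace X] [CompleteSpace X]
    [IsTopologicalAddGroup X] [ContinuousSMul ℂ X]
    (ι : X →ₗ[ℂ] (EuclideanSpace ℂ (Fin d) → ℂ)) (hinj : Function.Injective ι)
    (hholo : ∀ f : X, DifferentiableOn ℂ (ι f) Ω)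
    (hptw : ∀ (g : ℕ → X) (f : X), Filter.Tendsto g Filter.atTop (nhds f) →
      ∀ z ∈ Ω, Filter.Tendsto (fun n => ι (g n) z) Filter.atTop (nhds (ι f z)))
    (hnot : ∀ f : X, ExtendableRiemann Ω (ι f)) :
    ∃ (c₁ c₂ : EuclideanSpace ℂ (Fin d)) (r₁ r₂ : ℝ), 0 < r₁ ∧ 0 < r₂ ∧
      closedBall c₁ r₁ ⊆ ball c₂ r₂ ∩ Ω ∧
      (ball c₂ r₂ ∩ Ω).Nonempty ∧ (ball c₂ r₂ ∩ Ωᶜ).Nonempty ∧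
      ∀ f : X, ∃ (F : EuclideanSpace ℂ (Fin d) → ℂ) (M : ℝ),
        DifferentiableOn ℂ F (ball c₂ r₂) ∧
        (∀ z ∈ ball c₂ r₂, ‖F z‖ ≤ M) ∧
        EqOn F (ι f) (ball c₁ r₁) := by
  classical
  haveI : Nonempty X := ⟨0⟩
  obtain ⟨D, hDc, hDd⟩ := TopologicalSpace.exists_countable_dense (EuclideanSpace ℂ (Fin d))
  haveI := hDc.to_subtype
  -- the candidate sets
  set S : EuclideanSpace ℂ (Fin d) → EuclideanSpace ℂ (Fin d) → ℝ → ℝ → ℝ → Set X :=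
    fun c₁ c₂ r₁ r₂ M => {f | ∃ F, DifferentiableOn ℂ F (ball c₂ r₂) ∧
      (∀ z ∈ ball c₂ r₂, ‖F z‖ ≤ M) ∧ EqOn F (ι f) (ball c₁ r₁)} with hS
  set Geo : EuclideanSpace ℂ (Fin d) → EuclideanSpace ℂ (Fin d) → ℝ → ℝ → Prop :=
    fun c₁ c₂ r₁ r₂ => 0 < r₁ ∧ 0 < r₂ ∧ closedBall c₁ r₁ ⊆ ball c₂ r₂ ∩ Ω ∧
      (ball c₂ r₂ ∩ Ωᶜ).Nonempty with hGeo
  set T : ↥D × ↥D × ℚ × ℚ × ℕ → Set X := fun i =>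
    {f | Geo i.1 i.2.1 i.2.2.1 i.2.2.2.1 ∧
      f ∈ S i.1 i.2.1 i.2.2.1 i.2.2.2.1 i.2.2.2.2} with hT
  -- each S with valid geometry is closed
  have hSclosed : ∀ (c₁ c₂ : EuclideanSpace ℂ (Fin d)) (r₁ r₂ : ℝ) (M : ℕ),
      Geo c₁ c₂ r₁ r₂ → IsClosed (S c₁ c₂ r₁ r₂ M) := by
    intro c₁ c₂ r₁ r₂ M hgeo
    obtain ⟨hr₁, hr₂, hsub, -⟩ := hgeo
    apply IsSeqClosed.isClosed
    intro g f hg hgf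
    choose FF hFd hFM hFe using hg
    set φ : Ultrafilter ℕ := Ultrafilter.of atTop with hφdef
    have hφ : ↑φ ≤ (atTop : Filter ℕ) := Ultrafilter.of_le _
    have hex : ∀ z ∈ ball c₂ r₂, ∃ a : ℂ, Tendsto (fun n => FF n z) ↑φ (𝓝 a) := by
      intro z hz
      obtain ⟨a, -, ha⟩ := (isCompact_closedBall (0:ℂ) M).ultrafilter_le_nhds
        (φ.map (fun n => FF n z))
        (by rw [Ultrafilter.coe_map, Filter.le_principal_iff]
            exact Filter.mem_map.mpr (by
              filter_upwards with n
              exact mem_closedBall_zero_iff.mpr (hFM n z hz)))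
      rw [Ultrafilter.coe_map] at ha
      exact ⟨a, ha⟩
    set G : EuclideanSpace ℂ (Fin d) → ℂ := fun z => limUnder ↑φ (fun n => FF n z) with hGdef
    have hG : ∀ z ∈ ball c₂ r₂, Tendsto (fun n => FF n z) ↑φ (𝓝 (G z)) := by
      intro z hz
      obtain ⟨a, ha⟩ := hex z hz
      have : G z = a := ha.limUnder_eq
      rwa [this]
    refine ⟨G, limit_diff φ hFd hFM hG, ?_, ?_⟩
    · intro z hz
      exact le_of_tendsto (hG z hz).norm (by filter_upwards with n using hFM n z hz)
    · intro z hz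
      have hzΩ : z ∈ Ω := (hsub (ball_subset_closedBall hz)).2
      have hz₂ : z ∈ ball c₂ r₂ := (hsub (ball_subset_closedBall hz)).1
      have h1 : Tendsto (fun n => FF n z) ↑φ (𝓝 (ι f z)) := by
        have := (hptw g f hgf z hzΩ).mono_left hφ
        refine this.congr fun n => ?_
        exact (hFe n hz).symm
      exact tendsto_nhds_unique (hG z hz₂) h1
  have hTclosed : ∀ i, IsClosed (T i) := by
    intro i
    by_cases h : Geo i.1 i.2.1 i.2.2.1 i.2.2.2.1
    · have : T i = S i.1 i.2.1 i.2.2.1 i.2.2.2.1 i.2.2.2.2 := by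
        ext f
        exact ⟨fun hf => hf.2, fun hf => ⟨h, hf⟩⟩
      rw [this]
      exact hSclosed _ _ _ _ _ h
    · have : T i = ∅ := by
        ext f; simp [hT, h]
      rw [this]; exact isClosed_empty
  -- the sets cover X
  have hTcover : ⋃ i, T i = univ := by
    rw [eq_univ_iff_forall]
    intro f
    rw [mem_iUnion]
    obtain ⟨c₁, c₂, r₁, r₂, hr₁, hr₂, hsub, hne₁, hne₂, F, M, hFd, hFM, hFe⟩ := hnot f
    obtain ⟨x, hxball, hxcompl⟩ := hne₂
    have hsubB : closedBall c₁ r₁ ⊆ ball c₂ r₂ := hsub.trans inter_subset_left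
    -- choose a uniform margin δ
    set K : Set (EuclideanSpace ℂ (Fin d)) := insert x (closedBall c₁ r₁) with hK
    have hKc : IsCompact K := (isCompact_closedBall c₁ r₁).insert x
    have hKsub : K ⊆ ball c₂ r₂ := insert_subset hxball hsubB
    have hdistc : Continuous fun y : EuclideanSpace ℂ (Fin d) => dist y c₂ :=
      continuous_id.dist continuous_const
    obtain ⟨y₀, hy₀K, hy₀max⟩ := hKc.exists_isMaxOn ⟨x, mem_insert x _⟩
      hdistc.continuousOn
    set δ : ℝ := r₂ - dist y₀ c₂ with hδ
    have hδpos : 0 < δ := by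
      have := mem_ball.mp (hKsub hy₀K); simp only [hδ]; linarith
    have hδle : δ ≤ r₂ := by
      have : (0:ℝ) ≤ dist y₀ c₂ := dist_nonneg
      simp only [hδ]; linarith
    have hKd : ∀ y ∈ K, dist y c₂ ≤ r₂ - δ := by
      intro y hy
      have h1 : dist y c₂ ≤ dist y₀ c₂ := hy₀max hy
      simp only [hδ]; linarith
    -- dense approximations
    obtain ⟨c₂', hc₂'D, hc₂'⟩ := hDd.exists_mem_open isOpen_ball
      ⟨c₂, mem_ball_self (by positivity : (0:ℝ) < δ/4)⟩
    obtain ⟨c₁', hc₁'D, hc₁'⟩ := hDd.exists_mem_open isOpen_ball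
      ⟨c₁, mem_ball_self (by positivity : (0:ℝ) < r₁/4)⟩
    obtain ⟨r₂', hr₂'l, hr₂'u⟩ := exists_rat_btwn (show r₂ - δ/2 < r₂ - δ/4 by linarith)
    obtain ⟨r₁', hr₁'l, hr₁'u⟩ := exists_rat_btwn (show r₁/4 < r₁/2 by linarith)
    have hc₂'d : dist c₂' c₂ < δ/4 := mem_ball.mp hc₂'
    have hc₁'d : dist c₁' c₁ < r₁/4 := mem_ball.mp hc₁'
    have hc₂c : dist c₂ c₂' < δ/4 := by rwa [dist_comm] at hc₂'d
    refine ⟨(⟨c₁', hc₁'D⟩, ⟨c₂', hc₂'D⟩, r₁', r₂', ⌈M⌉₊), ?_, ?_⟩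
    · -- geometry
      refine ⟨show (0:ℝ) < ((r₁':ℚ):ℝ) by linarith,
        show (0:ℝ) < ((r₂':ℚ):ℝ) by linarith, ?_, ?_⟩
      · intro y hy
        rw [mem_closedBall] at hy
        have hyc₁ : dist y c₁ ≤ r₁ := by
          calc dist y c₁ ≤ dist y c₁' + dist c₁' c₁ := dist_triangle _ _ _
            _ ≤ (r₁':ℝ) + r₁/4 := by exact add_le_add hy hc₁'d.le
            _ ≤ r₁ := by
                have : (r₁':ℝ) < r₁/2 := hr₁'u
                linarith
        have hyK : y ∈ K := mem_insert_of_mem _ (mem_closedBall.mpr hyc₁)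
        constructor
        · rw [mem_ball]
          calc dist y c₂' ≤ dist y c₂ + dist c₂ c₂' := dist_triangle _ _ _
            _ ≤ (r₂ - δ) + δ/4 := add_le_add (hKd y hyK) hc₂c.le
            _ < r₂' := by
                have : r₂ - δ/2 < (r₂':ℝ) := hr₂'l
                linarith
        · exact (hsub (mem_closedBall.mpr hyc₁)).2
      · refine ⟨x, ?_, hxcompl⟩
        rw [mem_ball]
        calc dist x c₂' ≤ dist x c₂ + dist c₂ c₂' := dist_triangle _ _ _
          _ ≤ (r₂ - δ) + δ/4 := add_le_add (hKd x (mem_insert x _)) hc₂c.le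
          _ < r₂' := by
              have : r₂ - δ/2 < (r₂':ℝ) := hr₂'l
              linarith
    · -- membership in S
      have hB₂sub : ball c₂' (r₂':ℝ) ⊆ ball c₂ r₂ := by
        intro z hz
        rw [mem_ball] at hz ⊢
        calc dist z c₂ ≤ dist z c₂' + dist c₂' c₂ := dist_triangle _ _ _
          _ < (r₂':ℝ) + δ/4 := add_lt_add hz hc₂'d
          _ < r₂ := by
              have : (r₂':ℝ) < r₂ - δ/4 := hr₂'u
              linarith
      have hB₁sub : ball c₁' (r₁':ℝ) ⊆ ball c₁ r₁ := by
        intro z hz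
        rw [mem_ball] at hz ⊢
        calc dist z c₁ ≤ dist z c₁' + dist c₁' c₁ := dist_triangle _ _ _
          _ < (r₁':ℝ) + r₁/4 := add_lt_add hz hc₁'d
          _ < r₁ := by
              have : (r₁':ℝ) < r₁/2 := hr₁'u
              linarith
      exact ⟨F, hFd.mono hB₂sub,
        fun z hz => le_trans (hFM z (hB₂sub hz)) (Nat.le_ceil M),
        fun z hz => hFe (hB₁sub hz)⟩
  -- Baire category
  obtain ⟨i₀, f₀, hf₀⟩ := nonempty_interior_of_iUnion_of_closed hTclosed hTcover
  obtain ⟨hgeo, -⟩ := interior_subset hf₀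
  -- name the parameters
  set c₁ := (i₀.1 : EuclideanSpace ℂ (Fin d))
  set c₂ := (i₀.2.1 : EuclideanSpace ℂ (Fin d))
  set r₁ := ((i₀.2.2.1 : ℚ) : ℝ)
  set r₂ := ((i₀.2.2.2.1 : ℚ) : ℝ)
  set M := ((i₀.2.2.2.2 : ℕ) : ℝ)
  obtain ⟨hr₁, hr₂, hsub, hne₂⟩ := hgeo
  have hne₁ : (ball c₂ r₂ ∩ Ω).Nonempty :=
    ⟨c₁, hsub (mem_closedBall_self hr₁.le)⟩
  refine ⟨c₁, c₂, r₁, r₂, hr₁, hr₂, hsub, hne₁, hne₂, ?_⟩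
  intro f
  obtain ⟨ε, hε, hball⟩ := Metric.isOpen_iff.mp isOpen_interior f₀ hf₀
  have hcont : Tendsto (fun t : ℝ => f₀ + (t:ℂ) • f) (𝓝 0) (𝓝 f₀) := by
    have : Continuous fun t : ℝ => f₀ + (t:ℂ) • f :=
      continuous_const.add (Complex.continuous_ofReal.smul continuous_const)
    simpa using this.tendsto 0
  have hev : ∀ᶠ t : ℝ in 𝓝 0, f₀ + (t:ℂ) • f ∈ ball f₀ ε :=
    hcont.eventually (Metric.ball_mem_nhds f₀ hε)
  have hev' : ∀ᶠ t : ℝ in 𝓝[>] (0:ℝ), f₀ + (t:ℂ) • f ∈ ball f₀ ε :=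
    hev.filter_mono nhdsWithin_le_nhds
  obtain ⟨t, htmem, htpos⟩ := (hev'.and eventually_mem_nhdsWithin).exists
  have hf₀T : f₀ ∈ T i₀ := interior_subset hf₀
  have hf₁T : f₀ + (t:ℂ) • f ∈ T i₀ := interior_subset (hball htmem)
  obtain ⟨-, F₀, hF₀d, hF₀M, hF₀e⟩ := hf₀T
  obtain ⟨-, F₁, hF₁d, hF₁M, hF₁e⟩ := hf₁T
  have htne : ((t:ℂ)) ≠ 0 := by
    simpa using ne_of_gt htpos
  refine ⟨fun z => ((t:ℂ))⁻¹ * (F₁ z - F₀ z), ‖((t:ℂ))⁻¹‖ * (M + M),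
    (hF₁d.sub hF₀d).const_mul _, ?_, ?_⟩
  · intro z hz
    rw [norm_mul]
    apply mul_le_mul_of_nonneg_left _ (norm_nonneg _)
    calc ‖F₁ z - F₀ z‖ ≤ ‖F₁ z‖ + ‖F₀ z‖ := norm_sub_le _ _
      _ ≤ M + M := add_le_add (hF₁M z hz) (hF₀M z hz)
  · intro z hz
    have h1 : F₁ z = ι f₀ z + (t:ℂ) * ι f z := by
      have := hF₁e hz
      rw [this, map_add, map_smul]
      simp
    have h0 : F₀ z = ι f₀ z := hF₀e hz
    simp only [h1, h0]
    rw [add_sub_cancel_left]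
    exact inv_mul_cancel_left₀ htne _
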